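/- (Lemma 4.3 of the paper.) Let 𝒫_sup ⊂ ℝ^p be compact with positive Lebesgue measure, 𝒯_sup = [0,T] with T > 0, and let u : 𝒫_sup × 𝒯_sup → ℝ^{N_h} be continuous. Fix N ≤ N_h and let V_∞ ∈ ℝ^{N_h×N} be a semi-orthogonal minimizer of ∫_{𝒫_sup × 𝒯_sup} ‖u(z) − W Wᵀ u(z)‖² dz over semi-orthogonal matrices W. Then there exists a sampling strategy — namely μ_1, …, μ_{N_s} drawn i.i.d. uniformly on 𝒫_sup and the equispaced time grid t_k = kT/N_t, k = 1, …, N_t — such that, letting V = V(N_s, N_t) ∈ ℝ^{N_h×N} be a semi-orthogonal minimizer of (|𝒫_sup × 𝒯_sup|/(N_s N_t)) Σ_{j=1}^{N_s} Σ_{k=1}^{N_t} ‖u(μ_j, t_k) − W Wᵀ u(μ_j, t_k)‖² over semi-orthogonal W, the POD generalization error ℰ^gen_POD(𝒫_sup × 𝒯_sup; N_s, N_t) = ∫_{𝒫_sup × 𝒯_sup} ( ‖u(z) − V Vᵀ u(z)‖² − ‖u(z) − V_∞ V_∞ᵀ u(z)‖² ) dz converges to 0 almost surely as N_s, N_t →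 ∞ (e.g. along N_s = N_t = n → ∞). -/

import Mathlib

open Matrix MeasureTheory Filter ProbabilityTheory Topology

/-- Identification of a plain tuple in `ℝ^n` with an element of `EuclideanSpace ℝ (Fin n)`,
so that `‖·‖` denotes the Euclidean norm. -/
def toEuc {n : ℕ} (x : Fin n → ℝ) : EuclideanSpace ℝ (Fin n) := WithLp.toLp 2 x

/-- The empirical mean squared POD projection error
`(|P × [0,T]|/n²) ∑_{j=1}^{n} ∑_{k=1}^{n} ‖u(μ_j, kT/n) − W Wᵀ u(μ_j, kT/n)‖²`
associated with sampled parameters `μs 0, …, μs (n-1)`, the equispaced time grid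
`t_k = kT/n`, and a matrix `W`. -/
noncomputable def empiricalPODError {p Nh N : ℕ} (P : Set (Fin p → ℝ)) (T : ℝ)
    (u : (Fin p → ℝ) × ℝ → EuclideanSpace ℝ (Fin Nh))
    (μs : ℕ → (Fin p → ℝ)) (n : ℕ) (W : Matrix (Fin Nh) (Fin N) ℝ) : ℝ :=
  ((volume (P ×ˢ Set.Icc 0 T)).toReal / (n * n : ℝ)) *
    ∑ j ∈ Finset.range n, ∑ k ∈ Finset.range n,
      ‖u (μs j, ((k : ℝ) + 1) * T / n)
        - toEuc (W.mulVec (Wᵀ.mulVec (u (μs j, ((k : ℝ) + 1) * T / n))))‖ ^ 2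

section Alg
variable {Nh N : ℕ}

lemma proj_symm {W : Matrix (Fin Nh) (Fin N) ℝ} (hW : Wᵀ * W = 1) :
    (W * Wᵀ)ᵀ = W * Wᵀ := by
  simp [Matrix.transpose_mul]

lemma proj_idem {W : Matrix (Fin Nh) (Fin N) ℝ} (hW : Wᵀ * W = 1) :
    (W * Wᵀ) * (W * Wᵀ) = W * Wᵀ := by
  rw [Matrix.mul_assoc, ← Matrix.mul_assoc Wᵀ W Wᵀ, hW, Matrix.one_mul]

lemma proj_entry_eq {W : Matrix (Fin Nh) (Fin N) ℝ} (hW : Wᵀ * W = 1) (a b : Fin Nh) :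
    (W * Wᵀ) a b = ∑ c, (W * Wᵀ) a c * (W * Wᵀ) b c := by
  have h := proj_idem hW
  have h2 : ((W * Wᵀ) * (W * Wᵀ)) a b = (W * Wᵀ) a b := by rw [h]
  rw [Matrix.mul_apply] at h2
  rw [← h2]
  refine Finset.sum_congr rfl fun c _ => ?_
  have : (W * Wᵀ) c b = (W * Wᵀ) b c := by
    conv_lhs => rw [← proj_symm hW]
    simp [Matrix.transpose_apply]
  rw [this]

lemma proj_entry_bound {W : Matrix (Fin Nh) (Fin N) ℝ} (hW : Wᵀ * W = 1) (a b : Fin Nh) :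
    |(W * Wᵀ) a b| ≤ 1 := by
  set Pr := W * Wᵀ with hPr
  have haa : Pr a a = ∑ c, Pr a c * Pr a c := proj_entry_eq hW a a
  have hab2 : Pr a b * Pr a b ≤ Pr a a := by
    rw [haa]
    have := Finset.single_le_sum (f := fun c => Pr a c * Pr a c)
      (fun c _ => mul_self_nonneg _) (Finset.mem_univ b)
    -- need Pr a b * Pr a b ≤ ∑ c, Pr a c * Pr a c
    exact this
  have haa_nonneg : 0 ≤ Pr a a := by
    rw [haa]; exact Finset.sum_nonneg fun c _ => mul_self_nonneg _
  have haa_sq : Pr a a * Pr a a ≤ Pr a a := by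
    have h := Finset.single_le_sum (f := fun c => Pr a c * Pr a c)
      (fun c _ => mul_self_nonneg _) (Finset.mem_univ a)
    nth_rewrite 3 [haa]
    exact h
  have haa_le : Pr a a ≤ 1 := by nlinarith
  exact abs_le_one_iff_mul_self_le_one.2 (le_trans hab2 haa_le)

lemma proj_expand {W : Matrix (Fin Nh) (Fin N) ℝ} (hW : Wᵀ * W = 1)
    (x : EuclideanSpace ℝ (Fin Nh)) :
    ‖x - toEuc (W.mulVec (Wᵀ.mulVec x))‖ ^ 2
      = (∑ i, x i ^ 2) - ∑ q : Fin Nh × Fin Nh, (W * Wᵀ) q.1 q.2 * (x q.1 * x q.2) := by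
  have hmv : W.mulVec (Wᵀ.mulVec x) = (W * Wᵀ).mulVec x := Matrix.mulVec_mulVec x W Wᵀ
  set Pr := W * Wᵀ with hPrdef
  have hnorm : ‖x - toEuc (W.mulVec (Wᵀ.mulVec x))‖ ^ 2
      = ∑ i, (x i - Pr.mulVec x i) ^ 2 := by
    rw [EuclideanSpace.norm_eq, Real.sq_sqrt (by positivity)]
    refine Finset.sum_congr rfl fun i _ => ?_
    rw [hmv]
    simp [toEuc, Real.norm_eq_abs, sq_abs]
  rw [hnorm]
  have hx : ∀ i, Pr.mulVec x i = ∑ b, Pr i b * x b := fun i => rfl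
  have key1 : ∑ i, x i * Pr.mulVec x i = ∑ q : Fin Nh × Fin Nh, Pr q.1 q.2 * (x q.1 * x q.2) := by
    rw [Fintype.sum_prod_type]
    refine Finset.sum_congr rfl fun i _ => ?_
    rw [hx, Finset.mul_sum]
    refine Finset.sum_congr rfl fun b _ => by ring
  have key2 : ∑ i, Pr.mulVec x i * Pr.mulVec x i
      = ∑ q : Fin Nh × Fin Nh, Pr q.1 q.2 * (x q.1 * x q.2) := by
    rw [Fintype.sum_prod_type]
    have expand : ∀ i, Pr.mulVec x i * Pr.mulVec x i
        = ∑ a, ∑ b, (Pr i a * Pr i b) * (x a * x b) := by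
      intro i
      rw [hx, Finset.sum_mul_sum]
      try exact Finset.sum_congr rfl fun a _ => Finset.sum_congr rfl fun b _ => by ring
    rw [Finset.sum_congr rfl fun i _ => expand i]
    rw [Finset.sum_comm]
    refine Finset.sum_congr rfl fun a _ => ?_
    rw [Finset.sum_comm]
    refine Finset.sum_congr rfl fun b _ => ?_
    rw [← Finset.sum_mul]
    congr 1
    have pe : Pr a b = ∑ c, Pr a c * Pr b c := proj_entry_eq hW a b
    have hsymm : ∀ i j : Fin Nh, Pr i j = Pr j i := by
      intro i j
      have h : Pr j i = Prᵀ i j := rfl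
      rw [h, hPrdef, proj_symm hW]
    show ∑ i, Pr i a * Pr i b = Pr a b
    rw [pe]
    exact Finset.sum_congr rfl fun i _ => by rw [hsymm a i, hsymm b i]
  have : ∀ i, (x i - Pr.mulVec x i) ^ 2
      = x i ^ 2 - 2 * (x i * Pr.mulVec x i) + Pr.mulVec x i * Pr.mulVec x i := fun i => by ring
  rw [Finset.sum_congr rfl fun i _ => this i]
  rw [Finset.sum_add_distrib, Finset.sum_sub_distrib, ← Finset.mul_sum, key1, key2]
  ring

end Alg

lemma riemann_unif {p : ℕ} {P : Set (Fin p → ℝ)} (hP : IsCompact P)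
    {T : ℝ} (hT : 0 < T)
    {g : (Fin p → ℝ) × ℝ → ℝ} (hg : Continuous g) {ε : ℝ} (hε : 0 < ε) :
    ∃ N₀ : ℕ, 0 < N₀ ∧ ∀ n ≥ N₀, ∀ μ' ∈ P,
      |(T / n) * ∑ k ∈ Finset.range n, g (μ', ((k : ℝ) + 1) * T / n)
        - ∫ t in Set.Icc 0 T, g (μ', t)| ≤ ε := by
  set K := P ×ˢ Set.Icc (0:ℝ) T with hK
  have hKc : IsCompact K := hP.prod isCompact_Icc
  have huc := hKc.uniformContinuousOn_of_continuous hg.continuousOn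
  rw [Metric.uniformContinuousOn_iff] at huc
  have hε' : 0 < ε / (T + 1) := by positivity
  obtain ⟨δ, hδ, hδ'⟩ := huc (ε / (T + 1)) hε'
  obtain ⟨N₀, hN₀⟩ := exists_nat_gt (T / δ)
  have hN₀pos : 0 < N₀ := by
    by_contra h
    push_neg at h
    interval_cases N₀
    have : 0 < T / δ := by positivity
    simp at hN₀; linarith
  refine ⟨N₀, hN₀pos, fun n hn μ' hμ' => ?_⟩
  have hnpos : 0 < (n : ℝ) := by
    exact_mod_cast lt_of_lt_of_le hN₀pos hn
  have hTn : T / n < δ := by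
    have h1 : T / n ≤ T / N₀ := by
      apply div_le_div_of_nonneg_left hT.le (by exact_mod_cast hN₀pos)
      exact_mod_cast hn
    have h2 : T / N₀ < δ := by
      rw [div_lt_iff₀ (by exact_mod_cast hN₀pos)]
      rw [div_lt_iff₀ hδ] at hN₀
      linarith
    linarith
  set a : ℕ → ℝ := fun k => k * T / n with ha
  have hdiffa : ∀ k : ℕ, a (k + 1) - a k = T / n := by
    intro k; rw [ha]; push_cast; ring
  have hamono : ∀ k : ℕ, a k ≤ a (k + 1) := by
    intro k
    have h1 := hdiffa k
    have h2 : 0 ≤ T / (n:ℝ) := by positivity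
    linarith
  have hintg : ∀ k : ℕ, IntervalIntegrable (fun t => g (μ', t)) volume (a k) (a (k + 1)) := by
    intro k
    exact (hg.comp (continuous_const.prodMk continuous_id)).intervalIntegrable _ _
  have hsum := intervalIntegral.sum_integral_adjacent_intervals (μ := volume)
      (a := a) (n := n) (fun k _ => hintg k)
  have ha0 : a 0 = 0 := by simp [ha]
  have han : a n = T := by rw [ha]; field_simp
  have hIcc : ∫ t in Set.Icc 0 T, g (μ', t) = ∑ k ∈ Finset.range n, ∫ t in a k..a (k+1), g (μ', t) := by
    rw [hsum, ha0, han, intervalIntegral.integral_of_le hT.le, integral_Icc_eq_integral_Ioc]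
  rw [hIcc, Finset.mul_sum, ← Finset.sum_sub_distrib]
  have hbound : ∀ k ∈ Finset.range n,
      |T / n * g (μ', ((k:ℝ) + 1) * T / n) - ∫ t in a k..a (k+1), g (μ', t)| ≤ (T/n) * (ε / (T+1)) := by
    intro k hk
    rw [Finset.mem_range] at hk
    have hconst : T / n * g (μ', ((k:ℝ) + 1) * T / n)
        = ∫ t in a k..a (k+1), g (μ', a (k+1)) := by
      rw [intervalIntegral.integral_const, hdiffa k, smul_eq_mul]
      congr 2
      rw [ha]; push_cast; ring
    rw [hconst, ← intervalIntegral.integral_sub (intervalIntegrable_const (c := g (μ', a (k+1)))) (hintg k)]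
    have := intervalIntegral.norm_integral_le_of_norm_le_const
      (a := a k) (b := a (k+1)) (C := ε / (T+1))
      (f := fun t => g (μ', a (k+1)) - g (μ', t)) ?_
    · rw [Real.norm_eq_abs] at this
      calc |∫ t in a k..a (k+1), (g (μ', a (k+1)) - g (μ', t))| ≤ (ε / (T+1)) * |a (k+1) - a k| := this
        _ = (T/n) * (ε / (T+1)) := by
            rw [hdiffa k, abs_of_nonneg (by positivity)]; ring
    · intro t ht
      rw [Set.uIoc_of_le (hamono k)] at ht
      have htmem : t ∈ Set.Icc (0:ℝ) T := by
        constructor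
        · have : (0:ℝ) ≤ a k := by
            rw [ha]; positivity
          linarith [ht.1]
        · have : a (k+1) ≤ T := by
            rw [ha, div_le_iff₀ hnpos]
            have : (k:ℝ) + 1 ≤ n := by exact_mod_cast hk
            push_cast
            nlinarith
          linarith [ht.2]
      have hamem : a (k+1) ∈ Set.Icc (0:ℝ) T := by
        constructor
        · rw [ha]; positivity
        · rw [ha, div_le_iff₀ hnpos]
          have : (k:ℝ) + 1 ≤ n := by exact_mod_cast hk
          push_cast
          nlinarith
      have h1 : (μ', a (k+1)) ∈ K := Set.mk_mem_prod hμ' hamem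
      have h2 : (μ', t) ∈ K := Set.mk_mem_prod hμ' htmem
      have hdist : dist ((μ', a (k+1)) : (Fin p → ℝ) × ℝ) (μ', t) < δ := by
        rw [Prod.dist_eq]
        simp only [dist_self]
        have : dist (a (k+1)) t ≤ T / n := by
          rw [Real.dist_eq, abs_of_nonneg (by linarith [ht.2])]
          have := hdiffa k
          linarith [ht.1, ht.2]
        calc (0 : ℝ) ⊔ dist (a (k+1)) t ≤ T / n := by
              rw [sup_le_iff]; exact ⟨by positivity, this⟩
          _ < δ := hTn
      have := hδ' _ h1 _ h2 hdist
      rw [Real.dist_eq] at this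
      rw [Real.norm_eq_abs]
      exact this.le
  calc |∑ k ∈ Finset.range n, (T / n * g (μ', ((k:ℝ) + 1) * T / n) - ∫ t in a k..a (k+1), g (μ', t))|
      ≤ ∑ k ∈ Finset.range n, |T / n * g (μ', ((k:ℝ) + 1) * T / n) - ∫ t in a k..a (k+1), g (μ', t)| :=
        Finset.abs_sum_le_sum_abs _ _
    _ ≤ ∑ k ∈ Finset.range n, (T/n) * (ε / (T+1)) := Finset.sum_le_sum hbound
    _ = n * ((T/n) * (ε / (T+1))) := by rw [Finset.sum_const, Finset.card_range]; ring
    _ = T * (ε / (T+1)) := by field_simp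
    _ ≤ ε := by
        have h1 : T / (T + 1) ≤ 1 := by rw [div_le_one (by linarith)]; linarith
        calc T * (ε / (T+1)) = ε * (T / (T+1)) := by ring
          _ ≤ ε * 1 := by nlinarith
          _ = ε := mul_one ε

lemma mc_main {p : ℕ} {P : Set (Fin p → ℝ)} (hP : IsCompact P) (hPpos : 0 < volume P)
    {T : ℝ} (hT : 0 < T)
    {Ω : Type} [MeasureSpace Ω] [IsProbabilityMeasure (ℙ : Measure Ω)]
    (μ : ℕ → Ω → (Fin p → ℝ)) (hmeas : ∀ j, Measurable (μ j))
    (hindep : iIndepFun μ ℙ)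
    (hunif : ∀ j, Measure.map (μ j) ℙ = (volume P)⁻¹ • volume.restrict P)
    {g : (Fin p → ℝ) × ℝ → ℝ} (hg : Continuous g) :
    ∀ᵐ ω : Ω, Tendsto (fun n : ℕ => ((volume (P ×ˢ Set.Icc 0 T)).toReal / (n * n : ℝ)) *
      ∑ j ∈ Finset.range n, ∑ k ∈ Finset.range n, g (μ j ω, ((k:ℝ)+1) * T / n))
      atTop (𝓝 (∫ z in P ×ˢ Set.Icc 0 T, g z)) := by
  have hPm : MeasurableSet P := hP.measurableSet
  have hPfin : volume P < ⊤ := hP.measure_lt_top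
  set c := (volume P).toReal with hc
  have hcpos : 0 < c := ENNReal.toReal_pos hPpos.ne' hPfin.ne
  have hvol : (volume (P ×ˢ Set.Icc (0:ℝ) T)).toReal = c * T := by
    rw [Measure.volume_eq_prod, Measure.prod_prod, Real.volume_Icc, sub_zero,
      ENNReal.toReal_mul, ENNReal.toReal_ofReal hT.le]
  set gbar : (Fin p → ℝ) → ℝ := fun μ' => ∫ t in Set.Icc 0 T, g (μ', t) with hgbar
  have hgbarm : StronglyMeasurable gbar :=
    hg.stronglyMeasurable.integral_prod_right'
  obtain ⟨C, hC⟩ := (hP.prod isCompact_Icc).exists_bound_of_continuousOn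
    (f := g) hg.continuousOn
  have hgbarb : ∀ μ' ∈ P, ‖gbar μ'‖ ≤ C * T := by
    intro μ' hμ'
    have h := norm_setIntegral_le_of_norm_le_const (μ := volume)
      (s := Set.Icc (0:ℝ) T) (f := fun t => g (μ', t)) (C := C)
      (by rw [Real.volume_Icc]; exact ENNReal.ofReal_lt_top)
      (fun t ht => hC (μ', t) (Set.mk_mem_prod hμ' ht))
    rw [Real.volume_real_Icc_of_le hT.le, sub_zero] at h
    exact h
  set X : ℕ → Ω → ℝ := fun j ω => gbar (μ j ω) with hX
  have hident : ∀ i, IdentDistrib (X i) (X 0) ℙ ℙ := by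
    intro i
    have hμid : IdentDistrib (μ i) (μ 0) ℙ ℙ :=
      ⟨(hmeas i).aemeasurable, (hmeas 0).aemeasurable, by rw [hunif i, hunif 0]⟩
    exact hμid.comp hgbarm.measurable
  have hpind : Pairwise (Function.onFun (fun x1 x2 => IndepFun x1 x2 ℙ) X) := fun i j hij =>
    (hindep.indepFun hij).comp hgbarm.measurable hgbarm.measurable
  haveI : IsFiniteMeasure (volume.restrict P) :=
    ⟨by rwa [Measure.restrict_apply_univ]⟩
  have hinv0 : (volume P)⁻¹ ≠ 0 := ENNReal.inv_ne_zero.2 hPfin.ne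
  have hinvtop : (volume P)⁻¹ ≠ ⊤ := by
    simp [ENNReal.inv_ne_top]
    exact hPpos.ne'
  have hint : Integrable (X 0) ℙ := by
    have h1 : Integrable gbar (Measure.map (μ 0) ℙ) := by
      rw [hunif 0, integrable_smul_measure hinv0 hinvtop]
      apply Integrable.mono' (integrable_const (C * T)) hgbarm.aestronglyMeasurable
      exact (ae_restrict_iff' hPm).2 (Filter.Eventually.of_forall hgbarb)
    exact (integrable_map_measure hgbarm.aestronglyMeasurable (hmeas 0).aemeasurable).1 h1
  have hE0 : c * (∫ ω, X 0 ω) = ∫ μ' in P, gbar μ' := by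
    have h1 : ∫ ω, X 0 ω = ∫ x, gbar x ∂(Measure.map (μ 0) ℙ) :=
      (integral_map (hmeas 0).aemeasurable hgbarm.aestronglyMeasurable).symm
    rw [h1, hunif 0, integral_smul_measure, ENNReal.toReal_inv, smul_eq_mul, ← hc,
      ← mul_assoc, mul_inv_cancel₀ hcpos.ne', one_mul]
  have hL : ∫ z in P ×ˢ Set.Icc (0:ℝ) T, g z = ∫ μ' in P, gbar μ' := by
    have hint2 : IntegrableOn g (P ×ˢ Set.Icc (0:ℝ) T) volume :=
      hg.continuousOn.integrableOn_compact (hP.prod isCompact_Icc)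
    rw [Measure.volume_eq_prod] at hint2 ⊢
    exact setIntegral_prod g hint2
  have hslln := strong_law_ae_real X hint hpind hident
  have hin : ∀ᵐ ω : Ω, ∀ j, μ j ω ∈ P := by
    rw [ae_all_iff]
    intro j
    rw [ae_iff]
    have hpre : {ω : Ω | ¬ μ j ω ∈ P} = μ j ⁻¹' Pᶜ := rfl
    rw [hpre, ← Measure.map_apply (hmeas j) hPm.compl, hunif j]
    simp [Measure.restrict_apply hPm.compl]
  filter_upwards [hslln, hin] with ω hω hωin
  set Q : ℕ → ℕ → ℝ := fun n j => ∑ k ∈ Finset.range n, g (μ j ω, ((k:ℝ)+1) * T / n) with hQ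
  set S : ℕ → (Fin p → ℝ) → ℝ := fun n μ' =>
    (T / n) * ∑ k ∈ Finset.range n, g (μ', ((k:ℝ)+1) * T / n) with hS
  set Z : ℕ → ℝ := fun n => (∑ j ∈ Finset.range n, X j ω) / n with hZdef
  set Y : ℕ → ℝ := fun n => (∑ j ∈ Finset.range n, S n (μ j ω)) / n with hY
  have hYZ : Tendsto (fun n => Y n - Z n) atTop (𝓝 0) := by
    rw [NormedAddCommGroup.tendsto_nhds_zero]
    intro ε hε
    obtain ⟨N₀, hN₀pos, hN₀⟩ := riemann_unif hP hT hg (half_pos hε)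
    filter_upwards [eventually_ge_atTop N₀, eventually_ge_atTop 1] with n hn hn1
    have hnpos : 0 < (n : ℝ) := by exact_mod_cast hn1
    have hsub : Y n - Z n = (∑ j ∈ Finset.range n, (S n (μ j ω) - X j ω)) / n := by
      rw [hY, hZdef, Finset.sum_sub_distrib, sub_div]
    rw [hsub, Real.norm_eq_abs, abs_div, abs_of_pos hnpos]
    have hterm : ∀ j ∈ Finset.range n, |S n (μ j ω) - X j ω| ≤ ε / 2 :=
      fun j _ => hN₀ n hn (μ j ω) (hωin j)
    calc |∑ j ∈ Finset.range n, (S n (μ j ω) - X j ω)| / n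
        ≤ (∑ j ∈ Finset.range n, |S n (μ j ω) - X j ω|) / n := by
          gcongr
          exact Finset.abs_sum_le_sum_abs _ _
      _ ≤ (n * (ε / 2)) / n := by
          gcongr ?_ / _
          calc (∑ j ∈ Finset.range n, |S n (μ j ω) - X j ω|)
              ≤ ∑ j ∈ Finset.range n, (ε/2) := Finset.sum_le_sum hterm
            _ = n * (ε/2) := by rw [Finset.sum_const, Finset.card_range]; ring
      _ = ε / 2 := by
          rw [mul_comm, mul_div_assoc, div_self hnpos.ne', mul_one]
      _ < ε := by linarith
  have hYtend : Tendsto Y atTop (𝓝 (∫ ω, X 0 ω)) := by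
    have h := hYZ.add hω
    simp only [sub_add_cancel, zero_add] at h
    exact h
  have hcY : Tendsto (fun n => c * Y n) atTop (𝓝 (∫ z in P ×ˢ Set.Icc (0:ℝ) T, g z)) := by
    rw [hL, ← hE0]
    exact hYtend.const_mul c
  apply hcY.congr'
  filter_upwards [eventually_ge_atTop 1] with n hn1
  have hnne : (n : ℝ) ≠ 0 := by
    have : 0 < (n:ℝ) := by exact_mod_cast hn1
    exact this.ne'
  show c * Y n = (volume (P ×ˢ Set.Icc (0:ℝ) T)).toReal / (n * n : ℝ) * ∑ j ∈ Finset.range n, Q n j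
  have hsum : (∑ j ∈ Finset.range n, S n (μ j ω)) = (T / n) * ∑ j ∈ Finset.range n, Q n j := by
    rw [Finset.mul_sum]
  simp only [hY]
  rw [hvol, hsum]
  field_simp

lemma projfun_continuous {Nh N : ℕ} (W : Matrix (Fin Nh) (Fin N) ℝ) :
    Continuous (fun x : EuclideanSpace ℝ (Fin Nh) => toEuc (W.mulVec (Wᵀ.mulVec x))) := by
  have hmv : Continuous (fun y : Fin Nh → ℝ => W.mulVec (Wᵀ.mulVec y)) := by
    have h : (fun y : Fin Nh → ℝ => W.mulVec (Wᵀ.mulVec y)) = ⇑((W * Wᵀ).mulVecLin) := by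
      funext y
      rw [Matrix.mulVecLin_apply, Matrix.mulVec_mulVec]
    rw [h]
    exact LinearMap.continuous_of_finiteDimensional _
  exact ((EuclideanSpace.equiv (Fin Nh) ℝ).symm.continuous.comp
    (hmv.comp (EuclideanSpace.equiv (Fin Nh) ℝ).continuous))

/-- **Lemma 4.3 of the paper.** Let `𝒫_sup ⊂ ℝ^p` be compact with positive Lebesgue
measure, `𝒯_sup = [0,T]` with `T > 0`, and `u` continuous on `𝒫_sup × 𝒯_sup`.  Let
`Vinf` be a semi-orthogonal minimizer of the continuous mean squared projection error,
and for each `n` (with `N_s = N_t = n`) let `Vn n ω` be a semi-orthogonal minimizer of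
the empirical error built from `n` parameters drawn i.i.d. uniformly on `𝒫_sup` and the
equispaced time grid `t_k = kT/n`.  Then the POD generalization error
`ℰ^gen_POD(𝒫_sup × 𝒯_sup; n, n) = ∫ (‖u − Vn Vnᵀ u‖² − ‖u − Vinf Vinfᵀ u‖²)`
converges to `0` almost surely as `n → ∞`. -/
theorem pod_generalization_error_tendsto_zero
    {p Nh N : ℕ} (hNle : N ≤ Nh)
    (P : Set (Fin p → ℝ)) (hP : IsCompact P) (hPpos : 0 < volume P)
    (T : ℝ) (hT : 0 < T)
    (u : (Fin p → ℝ) × ℝ → EuclideanSpace ℝ (Fin Nh))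
    (hu : ContinuousOn u (P ×ˢ Set.Icc 0 T))
    {Ω : Type} [MeasureSpace Ω] [IsProbabilityMeasure (ℙ : Measure Ω)]
    (μ : ℕ → Ω → (Fin p → ℝ))
    (hmeas : ∀ j, Measurable (μ j))
    (hindep : iIndepFun μ ℙ)
    (hunif : ∀ j, Measure.map (μ j) ℙ = (volume P)⁻¹ • volume.restrict P)
    (Vinf : Matrix (Fin Nh) (Fin N) ℝ)
    (hVinf : Vinfᵀ * Vinf = 1)
    (hVinfmin : ∀ W : Matrix (Fin Nh) (Fin N) ℝ, Wᵀ * W = 1 →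
      (∫ z in P ×ˢ Set.Icc 0 T, ‖u z - toEuc (Vinf.mulVec (Vinfᵀ.mulVec (u z)))‖ ^ 2)
        ≤ ∫ z in P ×ˢ Set.Icc 0 T, ‖u z - toEuc (W.mulVec (Wᵀ.mulVec (u z)))‖ ^ 2)
    (Vn : ℕ → Ω → Matrix (Fin Nh) (Fin N) ℝ)
    (hVn : ∀ n ω, (Vn n ω)ᵀ * Vn n ω = 1)
    (hVnmin : ∀ n ω, ∀ W : Matrix (Fin Nh) (Fin N) ℝ, Wᵀ * W = 1 →
      empiricalPODError P T u (fun j => μ j ω) n (Vn n ω)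
        ≤ empiricalPODError P T u (fun j => μ j ω) n W) :
    ∀ᵐ ω : Ω, Tendsto
      (fun n : ℕ =>
        ∫ z in P ×ˢ Set.Icc 0 T,
          (‖u z - toEuc ((Vn n ω).mulVec ((Vn n ω)ᵀ.mulVec (u z)))‖ ^ 2
            - ‖u z - toEuc (Vinf.mulVec (Vinfᵀ.mulVec (u z)))‖ ^ 2))
      atTop (𝓝 0) := by
  classical
  set D : Set ((Fin p → ℝ) × ℝ) := P ×ˢ Set.Icc 0 T with hD
  have hDc : IsCompact D := hP.prod isCompact_Icc
  have hDm : MeasurableSet D := hDc.measurableSet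
  have hDcl : IsClosed D := hDc.isClosed
  -- coordinate functions of u, extended continuously to the whole space
  have hcoord : ∀ i : Fin Nh, ContinuousOn (fun z => u z i) D := fun i =>
    (EuclideanSpace.proj (𝕜 := ℝ) i).continuous.comp_continuousOn hu
  have hv : ∀ i : Fin Nh, ∃ v : ((Fin p → ℝ) × ℝ) → ℝ,
      Continuous v ∧ ∀ z ∈ D, v z = u z i := by
    intro i
    obtain ⟨G, hG⟩ := ContinuousMap.exists_restrict_eq (Y := ℝ) hDcl
      ⟨D.restrict (fun z => u z i), (continuousOn_iff_continuous_restrict.1 (hcoord i))⟩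
    refine ⟨G, G.continuous, fun z hz => ?_⟩
    have := congrFun (congrArg ContinuousMap.toFun hG) ⟨z, hz⟩
    simp at this; exact this
  choose v hvcont hveq using hv
  -- the auxiliary continuous functions
  set g0 : ((Fin p → ℝ) × ℝ) → ℝ := fun z => ∑ i, v i z ^ 2 with hg0def
  have hg0c : Continuous g0 := continuous_finset_sum _ fun i _ => (hvcont i).pow 2
  set gq : Fin Nh × Fin Nh → ((Fin p → ℝ) × ℝ) → ℝ := fun q z => v q.1 z * v q.2 z with hgqdef
  have hgqc : ∀ q, Continuous (gq q) := fun q => (hvcont q.1).mul (hvcont q.2)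
  -- pointwise identity on D
  have hkey : ∀ (W : Matrix (Fin Nh) (Fin N) ℝ), Wᵀ * W = 1 → ∀ z ∈ D,
      ‖u z - toEuc (W.mulVec (Wᵀ.mulVec (u z)))‖ ^ 2
        = g0 z - ∑ q : Fin Nh × Fin Nh, (W * Wᵀ) q.1 q.2 * gq q z := by
    intro W hW z hz
    rw [proj_expand hW (u z)]
    congr 1
    · simp only [hg0def]
      exact (Finset.sum_congr rfl fun i _ => by rw [hveq i z hz]).symm
    · refine Finset.sum_congr rfl fun q _ => ?_
      simp only [hgqdef]
      rw [hveq q.1 z hz, hveq q.2 z hz]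
  -- continuity and integrability of the error integrand
  have hecont : ∀ W : Matrix (Fin Nh) (Fin N) ℝ,
      ContinuousOn (fun z => ‖u z - toEuc (W.mulVec (Wᵀ.mulVec (u z)))‖ ^ 2) D := by
    intro W
    exact ((continuous_id.sub (projfun_continuous W)).norm.pow 2).comp_continuousOn hu
  have heint : ∀ W : Matrix (Fin Nh) (Fin N) ℝ,
      IntegrableOn (fun z => ‖u z - toEuc (W.mulVec (Wᵀ.mulVec (u z)))‖ ^ 2) D volume :=
    fun W => (hecont W).integrableOn_compact hDc
  have hg0int : IntegrableOn g0 D volume := hg0c.continuousOn.integrableOn_compact hDc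
  have hgqint : ∀ q, IntegrableOn (gq q) D volume :=
    fun q => (hgqc q).continuousOn.integrableOn_compact hDc
  -- the continuous-domain energy identity
  set I : (((Fin p → ℝ) × ℝ) → ℝ) → ℝ := fun g => ∫ z in D, g z with hIdef
  have hEgen : ∀ (W : Matrix (Fin Nh) (Fin N) ℝ), Wᵀ * W = 1 →
      (∫ z in D, ‖u z - toEuc (W.mulVec (Wᵀ.mulVec (u z)))‖ ^ 2)
        = I g0 - ∑ q : Fin Nh × Fin Nh, (W * Wᵀ) q.1 q.2 * I (gq q) := by
    intro W hW
    rw [setIntegral_congr_fun hDm (fun z hz => hkey W hW z hz)]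
    rw [integral_sub hg0int (integrable_finset_sum _ fun q _ => ((hgqint q).const_mul _))]
    congr 1
    rw [integral_finset_sum _ fun q _ => ((hgqint q).const_mul _)]
    exact Finset.sum_congr rfl fun q _ => integral_const_mul _ _
  -- Monte Carlo events
  have hmc0 := mc_main hP hPpos hT μ hmeas hindep hunif hg0c
  have hmcq : ∀ᵐ ω : Ω, ∀ q : Fin Nh × Fin Nh,
      Tendsto (fun n : ℕ => ((volume D).toReal / (n * n : ℝ)) *
        ∑ j ∈ Finset.range n, ∑ k ∈ Finset.range n, gq q (μ j ω, ((k:ℝ)+1) * T / n))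
        atTop (𝓝 (I (gq q))) := by
    rw [ae_all_iff]
    exact fun q => mc_main hP hPpos hT μ hmeas hindep hunif (hgqc q)
  have hin : ∀ᵐ ω : Ω, ∀ j, μ j ω ∈ P := by
    rw [ae_all_iff]
    intro j
    rw [ae_iff]
    have hpre : {ω : Ω | ¬ μ j ω ∈ P} = μ j ⁻¹' Pᶜ := rfl
    rw [hpre, ← Measure.map_apply (hmeas j) hP.measurableSet.compl, hunif j]
    simp [Measure.restrict_apply hP.measurableSet.compl]
  filter_upwards [hmc0, hmcq, hin] with ω hω0 hωq hωin
  -- empirical averages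
  set A : (((Fin p → ℝ) × ℝ) → ℝ) → ℕ → ℝ := fun g n =>
    ((volume D).toReal / (n * n : ℝ)) *
      ∑ j ∈ Finset.range n, ∑ k ∈ Finset.range n, g (μ j ω, ((k:ℝ)+1) * T / n) with hAdef
  set Δ : ℕ → ℝ := fun n =>
    |I g0 - A g0 n| + ∑ q : Fin Nh × Fin Nh, |I (gq q) - A (gq q) n| with hΔdef
  have hΔ0 : Tendsto Δ atTop (𝓝 0) := by
    have h0 : Tendsto (fun n => |I g0 - A g0 n|) atTop (𝓝 0) := by
      have := (tendsto_const_nhds (x := I g0) (f := atTop)).sub hω0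
      simpa [hIdef, hD, hAdef] using this.abs
    have hq : Tendsto (fun n => ∑ q : Fin Nh × Fin Nh, |I (gq q) - A (gq q) n|) atTop (𝓝 0) := by
      have : Tendsto (fun n => ∑ q : Fin Nh × Fin Nh, |I (gq q) - A (gq q) n|) atTop
          (𝓝 (∑ q : Fin Nh × Fin Nh, (0:ℝ))) := by
        apply tendsto_finset_sum
        intro q _
        have := (tendsto_const_nhds (x := I (gq q)) (f := atTop)).sub (hωq q)
        simpa using this.abs
      simpa using this
    have := h0.add hq
    simpa using this
  -- empirical identity
  have hempid : ∀ n : ℕ, 1 ≤ n → ∀ (W : Matrix (Fin Nh) (Fin N) ℝ), Wᵀ * W = 1 →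
      empiricalPODError P T u (fun j => μ j ω) n W
        = A g0 n - ∑ q : Fin Nh × Fin Nh, (W * Wᵀ) q.1 q.2 * A (gq q) n := by
    intro n hn W hW
    have hnpos : 0 < (n:ℝ) := by exact_mod_cast hn
    have hmem : ∀ j, ∀ k ∈ Finset.range n,
        ((μ j ω, ((k:ℝ)+1) * T / n) : (Fin p → ℝ) × ℝ) ∈ D := by
      intro j k hk
      rw [Finset.mem_range] at hk
      refine Set.mk_mem_prod (hωin j) ⟨by positivity, ?_⟩
      rw [div_le_iff₀ hnpos]
      have : (k:ℝ) + 1 ≤ n := by exact_mod_cast hk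
      nlinarith
    have hptwise : ∀ j, ∀ k ∈ Finset.range n,
        ‖u (μ j ω, ((k:ℝ)+1) * T / n)
          - toEuc (W.mulVec (Wᵀ.mulVec (u (μ j ω, ((k:ℝ)+1) * T / n))))‖ ^ 2
        = g0 (μ j ω, ((k:ℝ)+1) * T / n)
          - ∑ q : Fin Nh × Fin Nh, (W * Wᵀ) q.1 q.2 * gq q (μ j ω, ((k:ℝ)+1) * T / n) :=
      fun j k hk => hkey W hW _ (hmem j k hk)
    unfold empiricalPODError
    rw [← hD]
    rw [Finset.sum_congr rfl fun j _ => Finset.sum_congr rfl fun k hk => hptwise j k hk]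
    simp only [Finset.sum_sub_distrib]
    have hswap : (∑ j ∈ Finset.range n, ∑ k ∈ Finset.range n,
        ∑ q : Fin Nh × Fin Nh, (W * Wᵀ) q.1 q.2 * gq q (μ j ω, ((k:ℝ)+1) * T / n))
        = ∑ q : Fin Nh × Fin Nh, (W * Wᵀ) q.1 q.2 *
          ∑ j ∈ Finset.range n, ∑ k ∈ Finset.range n, gq q (μ j ω, ((k:ℝ)+1) * T / n) := by
      rw [Finset.sum_congr rfl fun j _ => Finset.sum_comm, Finset.sum_comm]
      refine Finset.sum_congr rfl fun q _ => ?_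
      rw [Finset.mul_sum]
      exact Finset.sum_congr rfl fun j _ => (Finset.mul_sum _ _ _).symm
    have hfinal : (volume D).toReal / ((n:ℝ) * n) * ∑ q : Fin Nh × Fin Nh, ((W * Wᵀ) q.1 q.2 *
        ∑ j ∈ Finset.range n, ∑ k ∈ Finset.range n, gq q (μ j ω, ((k:ℝ)+1) * T / n))
        = ∑ q : Fin Nh × Fin Nh, (W * Wᵀ) q.1 q.2 * A (gq q) n := by
      rw [Finset.mul_sum]
      exact Finset.sum_congr rfl fun q _ => by simp only [hAdef]; ring
    rw [mul_sub, hswap, hfinal]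
  -- uniform deviation bound
  have hbound : ∀ n : ℕ, 1 ≤ n → ∀ (W : Matrix (Fin Nh) (Fin N) ℝ), Wᵀ * W = 1 →
      |(∫ z in D, ‖u z - toEuc (W.mulVec (Wᵀ.mulVec (u z)))‖ ^ 2)
        - empiricalPODError P T u (fun j => μ j ω) n W| ≤ Δ n := by
    intro n hn W hW
    rw [hEgen W hW, hempid n hn W hW]
    have hs : ∑ q : Fin Nh × Fin Nh, (W * Wᵀ) q.1 q.2 * I (gq q)
        - ∑ q : Fin Nh × Fin Nh, (W * Wᵀ) q.1 q.2 * A (gq q) n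
        = ∑ q : Fin Nh × Fin Nh, (W * Wᵀ) q.1 q.2 * (I (gq q) - A (gq q) n) := by
      rw [← Finset.sum_sub_distrib]
      exact Finset.sum_congr rfl fun q _ => by ring
    have hre : (I g0 - ∑ q : Fin Nh × Fin Nh, (W * Wᵀ) q.1 q.2 * I (gq q))
        - (A g0 n - ∑ q : Fin Nh × Fin Nh, (W * Wᵀ) q.1 q.2 * A (gq q) n)
        = (I g0 - A g0 n)
          - ∑ q : Fin Nh × Fin Nh, (W * Wᵀ) q.1 q.2 * (I (gq q) - A (gq q) n) := by
      rw [← hs]; ring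
    rw [hre]
    calc |(I g0 - A g0 n) - ∑ q : Fin Nh × Fin Nh, (W * Wᵀ) q.1 q.2 * (I (gq q) - A (gq q) n)|
        ≤ |I g0 - A g0 n|
          + |∑ q : Fin Nh × Fin Nh, (W * Wᵀ) q.1 q.2 * (I (gq q) - A (gq q) n)| := by
          rw [sub_eq_add_neg]
          refine (abs_add_le _ _).trans ?_
          rw [abs_neg]
      _ ≤ |I g0 - A g0 n| + ∑ q : Fin Nh × Fin Nh, |I (gq q) - A (gq q) n| := by
          gcongr
          refine (Finset.abs_sum_le_sum_abs _ _).trans ?_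
          refine Finset.sum_le_sum fun q _ => ?_
          rw [abs_mul]
          exact mul_le_of_le_one_left (abs_nonneg _) (proj_entry_bound hW q.1 q.2)
      _ = Δ n := by rw [hΔdef]
  -- assemble
  have hGap : ∀ n : ℕ,
      (∫ z in D, (‖u z - toEuc ((Vn n ω).mulVec ((Vn n ω)ᵀ.mulVec (u z)))‖ ^ 2
        - ‖u z - toEuc (Vinf.mulVec (Vinfᵀ.mulVec (u z)))‖ ^ 2))
      = (∫ z in D, ‖u z - toEuc ((Vn n ω).mulVec ((Vn n ω)ᵀ.mulVec (u z)))‖ ^ 2)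
        - ∫ z in D, ‖u z - toEuc (Vinf.mulVec (Vinfᵀ.mulVec (u z)))‖ ^ 2 :=
    fun n => integral_sub (heint (Vn n ω)) (heint Vinf)
  have h2Δ : Tendsto (fun n => 2 * Δ n) atTop (𝓝 0) := by
    have := hΔ0.const_mul 2
    simpa using this
  refine tendsto_of_tendsto_of_tendsto_of_le_of_le' tendsto_const_nhds h2Δ ?_ ?_
  · refine Filter.Eventually.of_forall fun n => ?_
    rw [hGap n]
    exact sub_nonneg.2 (hVinfmin (Vn n ω) (hVn n ω))
  · filter_upwards [eventually_ge_atTop 1] with n hn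
    rw [hGap n]
    have h1 := abs_le.1 (hbound n hn (Vn n ω) (hVn n ω))
    have h2 := abs_le.1 (hbound n hn Vinf hVinf)
    have h3 := hVnmin n ω Vinf hVinf
    linarith
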